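/- Let Γ be a finite group acting on L ≅ ℤ^ℓ via injective ρ : Γ → GL(L). The function F : ℤ_{>0} → R(Γ), q ↦ χ_{L/qL} (the class of the permutation representation of Γ on L/qL in the representation ring) is a quasi-polynomial of degree ℓ whose leading coefficient is (1/#Γ) · χ_reg, where χ_reg is the regular character of Γ. -/

import Mathlib

/-- Number of fixed points of the matrix `M` acting on row vectors of `(ℤ/qℤ)^ℓ`. -/
noncomputable def fixCard {ℓ : ℕ} (M : Matrix (Fin ℓ) (Fin ℓ) ℤ) (q : ℕ) : ℕ :=
  Nat.card {x : Fin ℓ → ZMod q // Matrix.vecMul x (M.map (Int.cast : ℤ → ZMod q)) = x}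

section Aux

open Matrix

/-- Counting the annihilator of `m` in `ZMod q`. -/
lemma card_ann (q : ℕ) (hq : q ≠ 0) (m : ℕ) :
    Nat.card {c : ZMod q // (m : ZMod q) * c = 0} = Nat.gcd m q := by
  haveI : NeZero q := ⟨hq⟩
  set f : ZMod q →+ ZMod q := AddMonoidHom.mulLeft (m : ZMod q) with hf
  have h1 : Nat.card {c : ZMod q // (m : ZMod q) * c = 0} = Nat.card f.ker := by
    apply Nat.card_congr
    exact Equiv.subtypeEquivRight (fun c => by simp [hf, AddMonoidHom.mem_ker])
  have hrange : f.range = AddSubgroup.zmultiples ((m : ℕ) : ZMod q) := by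
    ext c
    constructor
    · rintro ⟨b, rfl⟩
      refine ⟨(b.val : ℤ), ?_⟩
      show (b.val : ℤ) • (m : ZMod q) = f b
      rw [zsmul_eq_mul, hf]
      push_cast
      rw [ZMod.natCast_val, ZMod.cast_id]
      show b * (m : ZMod q) = (m : ZMod q) * b
      ring
    · rintro ⟨k, hk⟩
      refine ⟨(k : ZMod q), ?_⟩
      show (m : ZMod q) * (k : ZMod q) = c
      have hk' : k • (m : ZMod q) = c := hk
      rw [← hk', zsmul_eq_mul]
      ring
  have h2 : Nat.card (ZMod q) = Nat.card (ZMod q ⧸ f.ker) * Nat.card f.ker :=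
    AddSubgroup.card_eq_card_quotient_mul_card_addSubgroup f.ker
  have h3 : Nat.card (ZMod q ⧸ f.ker) = q / q.gcd m := by
    rw [Nat.card_congr (QuotientAddGroup.quotientKerEquivRange f).toEquiv, hrange,
      Nat.card_zmultiples, ZMod.addOrderOf_coe m hq]
  rw [Nat.card_zmod, h3] at h2
  rw [h1]
  have hg : q.gcd m ∣ q := Nat.gcd_dvd_left q m
  have : Nat.card f.ker = q / (q / q.gcd m) := by
    have hpos : 0 < q / q.gcd m := by
      apply Nat.div_pos (Nat.le_of_dvd (Nat.pos_of_ne_zero hq) hg)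
      exact Nat.pos_of_ne_zero (fun h => hq (by simpa [h] using hg))
    exact (Nat.div_eq_of_eq_mul_left hpos (h2.trans (Nat.mul_comm _ _))).symm
  rw [this, Nat.div_div_self hg hq]
  exact Nat.gcd_comm q m

/-- Counting homomorphisms between cyclic groups. -/
lemma card_hom_zmod (m q : ℕ) (hq : q ≠ 0) :
    Nat.card (ZMod m →+ ZMod q) = Nat.gcd m q := by
  rcases Nat.eq_zero_or_pos m with rfl | hm
  · rw [Nat.gcd_zero_left]
    have e : (ZMod 0 →+ ZMod q) ≃ ZMod q := (zmultiplesHom (ZMod q)).symm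
    rw [Nat.card_congr e, Nat.card_zmod]
  · have e1 : (ZMod m →+ ZMod q) ≃ {f : ℤ →+ ZMod q // f m = 0} := (ZMod.lift m).symm
    have e2 : {f : ℤ →+ ZMod q // f m = 0} ≃ {c : ZMod q // (m : ZMod q) * c = 0} := by
      refine (Equiv.subtypeEquiv (zmultiplesHom (ZMod q)).symm (fun f => ?_))
      have : f (m : ℤ) = (m : ℤ) • f 1 := by
        rw [← map_zsmul, smul_eq_mul, mul_one]
      simp only [zmultiplesHom, Equiv.coe_fn_symm_mk]
      rw [this, zsmul_eq_mul]
      push_cast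
      rfl
    rw [Nat.card_congr (e1.trans e2), card_ann q hq m]

/-- Counting homomorphisms out of a product. -/
lemma card_hom_prod {M N P : Type} [AddCommMonoid M] [AddCommMonoid N] [AddCommMonoid P] :
    Nat.card ((M × N) →+ P) = Nat.card (M →+ P) * Nat.card (N →+ P) := by
  rw [← Nat.card_prod]
  apply Nat.card_congr
  exact {
    toFun := fun f => (f.comp (AddMonoidHom.inl M N), f.comp (AddMonoidHom.inr M N))
    invFun := fun p => (p.1.comp (AddMonoidHom.fst M N)) + (p.2.comp (AddMonoidHom.snd M N))
    left_inv := fun f => by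
      ext ⟨a, b⟩
      simp only [AddMonoidHom.add_apply, AddMonoidHom.coe_comp, Function.comp_apply,
        AddMonoidHom.coe_fst, AddMonoidHom.coe_snd, AddMonoidHom.inl_apply, AddMonoidHom.inr_apply]
      rw [← map_add]
      simp
    right_inv := fun p => by
      refine Prod.ext ?_ ?_ <;> ext x <;> simp }

/-- Counting homomorphisms out of a finite free abelian group. -/
lemma card_hom_free (n q : ℕ) (hq : q ≠ 0) :
    Nat.card ((Fin n →₀ ℤ) →+ ZMod q) = q ^ n := by
  rw [Nat.card_congr Finsupp.liftAddHom.toEquiv.symm, Nat.card_pi]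
  simp only [Nat.card_congr (zmultiplesHom (ZMod q)).symm, Nat.card_zmod]
  rw [Finset.prod_const, Finset.card_univ, Fintype.card_fin]

/-- Counting homomorphisms out of a finite direct sum of cyclic groups. -/
lemma card_hom_directSum {ι : Type} [Fintype ι] [DecidableEq ι] (m : ι → ℕ) (q : ℕ)
    (hq : q ≠ 0) :
    Nat.card ((DirectSum ι fun i => ZMod (m i)) →+ ZMod q) = ∏ i, Nat.gcd (m i) q := by
  have e : ((DirectSum ι fun i => ZMod (m i)) →+ ZMod q) ≃ ((Π₀ i : ι, ZMod (m i)) →+ ZMod q) :=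
    Equiv.refl _
  rw [Nat.card_congr e, Nat.card_congr DFinsupp.liftAddHom.toEquiv.symm, Nat.card_pi]
  exact Finset.prod_congr rfl (fun i _ => card_hom_zmod (m i) q hq)

/-- Precomposition with an `AddEquiv`. -/
def homPrecompEquiv {G H C : Type} [AddMonoid G] [AddMonoid H] [AddCommMonoid C]
    (F : G ≃+ H) : (G →+ C) ≃ (H →+ C) where
  toFun f := f.comp F.symm.toAddMonoidHom
  invFun g := g.comp F.toAddMonoidHom
  left_inv f := by ext x; simp
  right_inv g := by ext x; simp

/-- The subgroup of `ℤ^ℓ` generated by the columns of `A` (image of `mulVec`). -/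
def colSpan {ℓ : ℕ} (A : Matrix (Fin ℓ) (Fin ℓ) ℤ) : AddSubgroup (Fin ℓ → ℤ) :=
  (Matrix.mulVecLin A).toAddMonoidHom.range

/-- The pairing hom `y ↦ ∑ i, y i • x i`. -/
def pairHom {ℓ q : ℕ} (x : Fin ℓ → ZMod q) : (Fin ℓ → ℤ) →+ ZMod q :=
  AddMonoidHom.mk' (fun y => ∑ i, y i • x i) (by
    intro a b
    simp [add_smul, Finset.sum_add_distrib])

lemma pairHom_apply {ℓ q : ℕ} (x : Fin ℓ → ZMod q) (y : Fin ℓ → ℤ) :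
    pairHom x y = ∑ i, y i • x i := rfl

lemma pairHom_vanish {ℓ q : ℕ} (A : Matrix (Fin ℓ) (Fin ℓ) ℤ) (x : Fin ℓ → ZMod q)
    (hx : Matrix.vecMul x (A.map (Int.cast : ℤ → ZMod q)) = 0) :
    colSpan A ≤ (pairHom x).ker := by
  rintro r ⟨v, rfl⟩
  show pairHom x (A *ᵥ v) = 0
  rw [pairHom_apply]
  have : ∀ i, (A *ᵥ v) i • x i = ∑ j, v j • ((A i j : ℤ) • x i) := by
    intro i
    show (∑ j, A i j * v j) • x i = _
    rw [Finset.sum_smul]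
    refine Finset.sum_congr rfl (fun j _ => ?_)
    rw [mul_comm]; exact mul_smul _ _ _
  rw [Finset.sum_congr rfl (fun i _ => this i), Finset.sum_comm]
  have key : ∀ j, ∑ i, v j • ((A i j : ℤ) • x i)
      = v j • (Matrix.vecMul x (A.map (Int.cast : ℤ → ZMod q)) j) := by
    intro j
    rw [← Finset.smul_sum]
    congr 1
    simp only [Matrix.vecMul, dotProduct, Matrix.map_apply]
    exact Finset.sum_congr rfl (fun i _ => by rw [zsmul_eq_mul, mul_comm])
  simp only [key, hx, Pi.zero_apply, smul_zero, Finset.sum_const_zero]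

lemma col_mem_colSpan {ℓ : ℕ} (A : Matrix (Fin ℓ) (Fin ℓ) ℤ) (j : Fin ℓ) :
    (fun i => A i j) ∈ colSpan A := by
  refine ⟨Pi.single j 1, ?_⟩
  show A *ᵥ Pi.single j 1 = _
  rw [Matrix.mulVec_single]
  simp
  rfl

/-- Fixed vectors mod `q` correspond to homs from the cokernel. -/
noncomputable def fixEquivHom {ℓ : ℕ} (A : Matrix (Fin ℓ) (Fin ℓ) ℤ) (q : ℕ) :
    {x : Fin ℓ → ZMod q // Matrix.vecMul x (A.map (Int.cast : ℤ → ZMod q)) = 0} ≃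
      (((Fin ℓ → ℤ) ⧸ colSpan A) →+ ZMod q) where
  toFun x := QuotientAddGroup.lift (colSpan A) (pairHom x.1) (pairHom_vanish A x.1 x.2)
  invFun f := ⟨fun i => f (QuotientAddGroup.mk (Pi.single i 1)), by
    funext j
    show ∑ i, _ * (A.map (Int.cast : ℤ → ZMod q)) i j = (0 : ZMod q)
    have step : ∀ i : Fin ℓ,
        f (QuotientAddGroup.mk (Pi.single i 1)) * (A.map (Int.cast : ℤ → ZMod q)) i j
          = f (QuotientAddGroup.mk (A i j • Pi.single i 1)) := by
      intro i
      rw [QuotientAddGroup.mk_zsmul, map_zsmul, zsmul_eq_mul, Matrix.map_apply]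
      exact mul_comm _ _
    rw [Finset.sum_congr rfl (fun i _ => step i), ← map_sum, ← QuotientAddGroup.mk_sum]
    have : (∑ i, A i j • Pi.single i (1 : ℤ)) = fun i => A i j := by
      have : ∀ i : Fin ℓ, A i j • Pi.single i (1 : ℤ) = (Pi.single i (A i j) : Fin ℓ → ℤ) := by
        intro i; rw [← Pi.single_smul, smul_eq_mul, mul_one]
      rw [Finset.sum_congr rfl (fun i _ => this i), Finset.univ_sum_single]
    rw [this, (QuotientAddGroup.eq_zero_iff _).2 (col_mem_colSpan A j), map_zero]⟩
  left_inv x := by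
    ext i
    show QuotientAddGroup.lift _ _ _ (QuotientAddGroup.mk (Pi.single i 1)) = x.1 i
    rw [QuotientAddGroup.lift_mk, pairHom_apply]
    simp [Pi.single_apply, ite_smul, Finset.sum_ite_eq']
  right_inv f := by
    refine DFunLike.ext _ _ (fun z => ?_)
    induction z using QuotientAddGroup.induction_on with
    | H y =>
      rw [QuotientAddGroup.lift_mk, pairHom_apply]
      have step : ∀ i : Fin ℓ, y i • f (QuotientAddGroup.mk (Pi.single i 1))
          = f (QuotientAddGroup.mk (Pi.single i (y i))) := by
        intro i
        rw [← map_zsmul, ← QuotientAddGroup.mk_zsmul, ← Pi.single_smul, smul_eq_mul, mul_one]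
      rw [Finset.sum_congr rfl (fun i _ => step i), ← map_sum, ← QuotientAddGroup.mk_sum,
        Finset.univ_sum_single]

/-- The main counting lemma: for a nonzero integer matrix `A`, the number of solutions of
`x A = 0` over `ℤ/q` is a quasi-polynomial in `q` of degree `< ℓ`. -/
lemma lemA {ℓ : ℕ} (A : Matrix (Fin ℓ) (Fin ℓ) ℤ) (hA : A ≠ 0) :
    ∃ n N : ℕ, n < ℓ ∧ 0 < N ∧ ∃ c : ℕ → ℕ, ∀ q : ℕ, 0 < q →
      Nat.card {x : Fin ℓ → ZMod q // Matrix.vecMul x (A.map (Int.cast : ℤ → ZMod q)) = 0}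
        = c (q % N) * q ^ n := by
  classical
  haveI : AddGroup.FG (Fin ℓ → ℤ) := Module.Finite.iff_addGroup_fg.mp inferInstance
  haveI : AddGroup.FG ((Fin ℓ → ℤ) ⧸ colSpan A) :=
    AddGroup.fg_of_surjective (QuotientAddGroup.mk'_surjective (colSpan A))
  obtain ⟨n, ι, fι, p, hp, e, ⟨F⟩⟩ :=
    AddCommGroup.equiv_free_prod_directSum_zmod ((Fin ℓ → ℤ) ⧸ colSpan A)
  set m : ι → ℕ := fun i => p i ^ e i with hm
  have count : ∀ q : ℕ, q ≠ 0 → Nat.card {x : Fin ℓ → ZMod q //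
        Matrix.vecMul x (A.map (Int.cast : ℤ → ZMod q)) = 0}
        = (∏ i, Nat.gcd (m i) q) * q ^ n := by
    intro q hq0
    rw [Nat.card_congr (fixEquivHom A q), Nat.card_congr (homPrecompEquiv F),
      card_hom_prod, card_hom_free n q hq0, card_hom_directSum m q hq0, mul_comm]
  refine ⟨n, ∏ i, m i, ?_, ?_, fun a => ∏ i, Nat.gcd (m i) a, ?_⟩
  · -- n < ℓ
    have hℓ : 1 ≤ ℓ := by
      rcases Nat.eq_zero_or_pos ℓ with h0 | h
      · subst h0; exact absurd (by ext i j; exact i.elim0) hA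
      · exact h
    have hentry : ∃ i j, A i j ≠ 0 := by
      by_contra h
      push_neg at h
      exact hA (by ext i j; exact h i j)
    obtain ⟨i0, j0, hij⟩ := hentry
    obtain ⟨qp, hqple, hqp⟩ := Nat.exists_infinite_primes ((A i0 j0).natAbs + 2)
    haveI : Fact qp.Prime := ⟨hqp⟩
    have hqp0 : qp ≠ 0 := hqp.ne_zero
    set B := A.map (Int.cast : ℤ → ZMod qp) with hBdef
    have hB : B i0 j0 ≠ 0 := by
      simp only [hBdef, Matrix.map_apply]
      rw [Ne, ZMod.intCast_zmod_eq_zero_iff_dvd]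
      intro hdvd
      have h1 : qp ∣ (A i0 j0).natAbs := by
        have := Int.natAbs_dvd_natAbs.mpr hdvd
        simpa using this
      have h2 : qp ≤ (A i0 j0).natAbs :=
        Nat.le_of_dvd (Int.natAbs_pos.mpr hij) h1
      omega
    have hKne : LinearMap.ker (Matrix.vecMulLinear B) ≠ ⊤ := by
      intro htop
      have hmem : Pi.single i0 (1 : ZMod qp) ∈ LinearMap.ker (Matrix.vecMulLinear B) :=
        htop ▸ Submodule.mem_top
      have h2 : Matrix.vecMul (Pi.single i0 (1 : ZMod qp)) B = 0 := by
        rw [← Matrix.vecMulLinear_apply]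
        exact hmem
      have h3 := congrFun h2 j0
      rw [Matrix.single_vecMul] at h3
      simp only [one_mul, one_smul, Pi.zero_apply] at h3
      exact hB h3
    have hfr : Module.finrank (ZMod qp) (LinearMap.ker (Matrix.vecMulLinear B)) < ℓ := by
      have h4 : Module.finrank (ZMod qp) (LinearMap.ker (Matrix.vecMulLinear B)) <
          Module.finrank (ZMod qp) (Fin ℓ → ZMod qp) :=
        Submodule.finrank_lt hKne
      rwa [Module.finrank_pi, Fintype.card_fin] at h4
    have hcard : Nat.card {x : Fin ℓ → ZMod qp // Matrix.vecMul x B = 0}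
        = qp ^ Module.finrank (ZMod qp) (LinearMap.ker (Matrix.vecMulLinear B)) := by
      have e : {x : Fin ℓ → ZMod qp // Matrix.vecMul x B = 0} ≃
          LinearMap.ker (Matrix.vecMulLinear B) :=
        Equiv.subtypeEquivRight (fun x => by
          rw [LinearMap.mem_ker, Matrix.vecMulLinear_apply])
      rw [Nat.card_congr e, Nat.card_eq_fintype_card,
        Module.card_eq_pow_finrank (K := ZMod qp), ZMod.card]
    have hlow : qp ^ n ≤ Nat.card {x : Fin ℓ → ZMod qp // Matrix.vecMul x B = 0} := by
      rw [count qp hqp0]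
      exact Nat.le_mul_of_pos_left _
        (Finset.prod_pos (fun i _ => Nat.gcd_pos_of_pos_right _ (Nat.pos_of_ne_zero hqp0)))
    have hup : Nat.card {x : Fin ℓ → ZMod qp // Matrix.vecMul x B = 0} ≤ qp ^ (ℓ - 1) := by
      rw [hcard]
      exact Nat.pow_le_pow_right hqp.pos (by omega)
    have hnle : n ≤ ℓ - 1 :=
      (Nat.pow_le_pow_iff_right hqp.one_lt).mp (le_trans hlow hup)
    omega
  · exact Finset.prod_pos (fun i _ => pow_pos (hp i).pos _)
  · intro q hq
    have hq0 : q ≠ 0 := hq.ne'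
    rw [count q hq0]
    congr 1
    refine Finset.prod_congr rfl (fun i _ => ?_)
    have hdvd : m i ∣ ∏ j, m j := Finset.dvd_prod_of_mem m (Finset.mem_univ i)
    rw [Nat.gcd_rec (m i) q, Nat.gcd_rec (m i) (q % ∏ j, m j),
      Nat.mod_mod_of_dvd q hdvd]

/-- Rewriting `fixCard` as the count of solutions of `x (M - 1) = 0`. -/
lemma fixCard_eq {ℓ : ℕ} (M : Matrix (Fin ℓ) (Fin ℓ) ℤ) (q : ℕ) :
    fixCard M q = Nat.card {x : Fin ℓ → ZMod q //
      Matrix.vecMul x ((M - 1).map (Int.cast : ℤ → ZMod q)) = 0} := by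
  unfold fixCard
  apply Nat.card_congr
  refine Equiv.subtypeEquivRight (fun x => ?_)
  have hmap : (M - 1).map (Int.cast : ℤ → ZMod q)
      = M.map (Int.cast : ℤ → ZMod q) - (1 : Matrix (Fin ℓ) (Fin ℓ) (ZMod q)) := by
    have h := map_sub ((Int.castRingHom (ZMod q)).mapMatrix) M 1
    simpa [RingHom.mapMatrix_apply] using h
  rw [hmap, Matrix.vecMul_sub, Matrix.vecMul_one, sub_eq_zero]

end Aux

/-- The function `F : q ↦ χ_{L/qL}` (the permutation character of
`Γ` on `(ℤ/qℤ)^ℓ`, identifying the representation ring `R(Γ)` with characters,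
i.e. `ℂ`-valued class functions `Γ → ℂ`) is a quasi-polynomial of degree `ℓ`
whose leading coefficient is `(1/#Γ) · χ_reg`, where `χ_reg(γ) = #Γ` if
`γ = 1` and `0` otherwise. -/
theorem stmt9 (ℓ : ℕ) (Γ : Type) [Group Γ] [Fintype Γ] [DecidableEq Γ]
    (ρ : Γ →* Matrix.GeneralLinearGroup (Fin ℓ) ℤ) (hρ : Function.Injective ρ) :
    ∃ n : ℕ, 0 < n ∧ ∃ g : ℕ → Polynomial (Γ → ℂ),
      (∀ q : ℕ, 0 < q →
        (fun γ : Γ => (fixCard (ρ γ : Matrix (Fin ℓ) (Fin ℓ) ℤ) q : ℂ))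
          = (g (q % n)).eval (fun _ : Γ => (q : ℂ)))
      ∧ ∀ a : ℕ, a < n →
          (g a).natDegree = ℓ ∧
          (g a).coeff ℓ
            = (Fintype.card Γ : ℂ)⁻¹ •
                (fun γ : Γ => if γ = 1 then (Fintype.card Γ : ℂ) else 0) := by
  classical
  have key : ∀ γ : Γ, ∃ (d N : ℕ) (c : ℕ → ℕ), 0 < N ∧ d ≤ ℓ ∧
      (γ = 1 → d = ℓ ∧ ∀ a, c a = 1) ∧ (γ ≠ 1 → d < ℓ) ∧
      ∀ q : ℕ, 0 < q → fixCard ((ρ γ : Matrix (Fin ℓ) (Fin ℓ) ℤ)) q = c (q % N) * q ^ d := by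
    intro γ
    rcases eq_or_ne γ 1 with rfl | hγ
    · refine ⟨ℓ, 1, fun _ => 1, one_pos, le_refl _, fun _ => ⟨rfl, fun _ => rfl⟩,
        fun h => absurd rfl h, ?_⟩
      intro q hq
      haveI : NeZero q := ⟨hq.ne'⟩
      have hone : ((ρ 1 : Matrix (Fin ℓ) (Fin ℓ) ℤ)) = 1 := by
        rw [map_one]; rfl
      rw [hone, one_mul]
      unfold fixCard
      have hcond : ∀ x : Fin ℓ → ZMod q,
          Matrix.vecMul x ((1 : Matrix (Fin ℓ) (Fin ℓ) ℤ).map (Int.cast : ℤ → ZMod q)) = x := by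
        intro x
        have h1 : (1 : Matrix (Fin ℓ) (Fin ℓ) ℤ).map (Int.cast : ℤ → ZMod q)
            = (1 : Matrix (Fin ℓ) (Fin ℓ) (ZMod q)) := by
          have h := map_one (RingHom.mapMatrix (m := Fin ℓ) (Int.castRingHom (ZMod q)))
          simpa [RingHom.mapMatrix_apply] using h
        rw [h1, Matrix.vecMul_one]
      rw [Nat.card_congr (Equiv.subtypeUnivEquiv hcond), Nat.card_pi]
      simp [Nat.card_zmod]
    · -- nontrivial element
      have hMne : ((ρ γ : Matrix (Fin ℓ) (Fin ℓ) ℤ)) - 1 ≠ 0 := by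
        rw [sub_ne_zero]
        intro h1
        apply hγ
        apply hρ
        rw [map_one]
        exact Units.ext (by simpa using h1)
      obtain ⟨d, N, hd, hN, c, hc⟩ := lemA _ hMne
      refine ⟨d, N, c, hN, le_of_lt hd, fun h => absurd h hγ, fun _ => hd, ?_⟩
      intro q hq
      rw [fixCard_eq, hc q hq]
  choose d N c hN hdle hone hlt hformula using key
  refine ⟨∏ γ : Γ, N γ, Finset.prod_pos (fun γ _ => hN γ), fun a =>
    ∑ γ : Γ, Polynomial.C ((Pi.single γ ((c γ (a % N γ) : ℂ)) : Γ → ℂ)) * Polynomial.X ^ (d γ),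
    ?_, ?_⟩
  · intro q hq
    funext γ0
    rw [Polynomial.eval_finset_sum]
    have hterm : ∀ γ : Γ,
        Polynomial.eval (fun _ : Γ => (q : ℂ))
          (Polynomial.C ((Pi.single γ ((c γ (q % (∏ γ' : Γ, N γ') % N γ) : ℂ)) : Γ → ℂ)) *
            Polynomial.X ^ (d γ))
          = (Pi.single γ ((c γ (q % N γ) : ℂ)) : Γ → ℂ) * (fun _ : Γ => (q : ℂ)) ^ (d γ) := by
      intro γ
      rw [Nat.mod_mod_of_dvd q (Finset.dvd_prod_of_mem N (Finset.mem_univ γ))]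
      simp [Polynomial.eval_mul, Polynomial.eval_pow]
    rw [Finset.sum_congr rfl (fun γ _ => hterm γ)]
    rw [Finset.sum_apply]
    have hsum : ∀ γ : Γ, γ ∈ Finset.univ → γ ≠ γ0 →
        ((Pi.single γ ((c γ (q % N γ) : ℂ)) : Γ → ℂ) * (fun _ : Γ => (q : ℂ)) ^ (d γ)) γ0 = 0 := by
      intro γ _ hne
      simp [Pi.single_eq_of_ne (Ne.symm hne)]
    rw [Finset.sum_eq_single γ0 hsum (fun h => absurd (Finset.mem_univ γ0) h)]
    simp only [Pi.mul_apply, Pi.pow_apply, Pi.single_eq_same]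
    rw [hformula γ0 q hq]
    push_cast
    ring
  · intro a ha
    have hcoeff : (∑ γ : Γ, Polynomial.C ((Pi.single γ ((c γ (a % N γ) : ℂ)) : Γ → ℂ))
        * Polynomial.X ^ (d γ)).coeff ℓ = Pi.single (1 : Γ) (1 : ℂ) := by
      rw [Polynomial.finset_sum_coeff]
      have hterm : ∀ γ : Γ,
          (Polynomial.C ((Pi.single γ ((c γ (a % N γ) : ℂ)) : Γ → ℂ)) * Polynomial.X ^ (d γ)).coeff ℓ
          = if γ = 1 then Pi.single (1 : Γ) (1 : ℂ) else 0 := by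
        intro γ
        rw [Polynomial.coeff_C_mul, Polynomial.coeff_X_pow]
        rcases eq_or_ne γ 1 with rfl | hγ
        · rw [(hone 1 rfl).1, if_pos rfl, if_pos rfl, (hone 1 rfl).2]
          simp
        · have hne : ℓ ≠ d γ := (Nat.ne_of_lt (hlt γ hγ)).symm
          rw [if_neg hγ, if_neg hne]
          simp
      rw [Finset.sum_congr rfl (fun γ _ => hterm γ)]
      simp
    constructor
    · have hub : (∑ γ : Γ, Polynomial.C ((Pi.single γ ((c γ (a % N γ) : ℂ)) : Γ → ℂ))
          * Polynomial.X ^ (d γ)).natDegree ≤ ℓ := by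
        refine Polynomial.natDegree_sum_le_of_forall_le _ _ (fun γ _ => ?_)
        refine le_trans (Polynomial.natDegree_mul_le) ?_
        rw [Polynomial.natDegree_C]
        rw [zero_add]
        exact le_trans (Polynomial.natDegree_X_pow_le (d γ)) (hdle γ)
      have hlb : ℓ ≤ (∑ γ : Γ, Polynomial.C ((Pi.single γ ((c γ (a % N γ) : ℂ)) : Γ → ℂ))
          * Polynomial.X ^ (d γ)).natDegree := by
        apply Polynomial.le_natDegree_of_ne_zero
        rw [hcoeff]
        intro h
        have := congrFun h 1
        simp at this
      exact le_antisymm hub hlb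
    · rw [hcoeff]
      funext γ0
      have hcard : (Fintype.card Γ : ℂ) ≠ 0 := by
        exact_mod_cast Fintype.card_ne_zero
      rcases eq_or_ne γ0 1 with rfl | hγ0
      · simp [Pi.single_eq_same, inv_mul_cancel₀ hcard]
      · simp [Pi.single_eq_of_ne hγ0, if_neg hγ0]
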